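/- Fix N ≥ 1 and β ≥ 0. For every disorder realization (k, b) of the diluted ferromagnet on N sites and every integer m ≥ 1: (1/N²) Σ_{p,q ∈ Fin N} (ω(σ_p σ_q))^m ≥ ( (1/N²) Σ_{p,q ∈ Fin N} ω(σ_p σ_q) )^m. -/
import Mathlib


open scoped BigOperators

/-- The set of spin values `{-1, 1}` as a finite subset of `ℝ`. -/
noncomputable abbrev SpinVal : Finset ℝ := {-1, 1}

/-- Spin configurations on `n` sites: maps `Fin n → ℝ` taking values in `{-1,1}`. -/
abbrev Conf (n : ℕ) := Fin n → SpinVal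

/-- Hamiltonian of the diluted ferromagnet for the disorder realization `(k, b)`:
`H(σ) = -Σ_{ν<k} σ_{(bν).1} σ_{(bν).2}`. -/
noncomputable def Hdil {n k : ℕ} (b : Fin k → Fin n × Fin n) (σ : Conf n) : ℝ :=
  - ∑ ν : Fin k, (σ (b ν).1 : ℝ) * (σ (b ν).2 : ℝ)

/-- Partition function of the diluted ferromagnet at inverse temperature `β`. -/
noncomputable def Zdil (n : ℕ) (β : ℝ) {k : ℕ} (b : Fin k → Fin n × Fin n) : ℝ :=
  ∑ σ : Conf n, Real.exp (-β * Hdil b σ)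

/-- Gibbs expectation `ω` of an observable for a fixed disorder realization. -/
noncomputable def gibbs (n : ℕ) (β : ℝ) {k : ℕ} (b : Fin k → Fin n × Fin n)
    (f : Conf n → ℝ) : ℝ :=
  (∑ σ : Conf n, f σ * Real.exp (-β * Hdil b σ)) / Zdil n β b

/-- The Poisson probability mass function with mean `lam`. -/
noncomputable def poissonPMF (lam : ℝ) (k : ℕ) : ℝ :=
  Real.exp (-lam) * lam ^ k / (Nat.factorial k : ℝ)

/-- Quenched expectation at connectivity `α` on `n` sites: the number of bonds `k` is
Poisson(αn) and the `2k` endpoints are i.i.d. uniform on the `n` sites. -/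
noncomputable def quenched (n : ℕ) (α : ℝ)
    (F : (k : ℕ) → (Fin k → Fin n × Fin n) → ℝ) : ℝ :=
  ∑' k : ℕ, poissonPMF (α * n) k *
    ((∑ b : Fin k → Fin n × Fin n, F k b) / ((n : ℝ) ^ 2) ^ k)

/-- Boltzmann weight of the `t`-perturbed (cavity) system with realization
`(k, b, k', l)`: `exp(β Σ_ν σσ + β Σ_μ σ_{l μ})`. -/
noncomputable def cavWeight (n : ℕ) (β : ℝ) {k k' : ℕ} (b : Fin k → Fin n × Fin n)
    (l : Fin k' → Fin n) (σ : Conf n) : ℝ :=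
  Real.exp (β * ∑ ν : Fin k, (σ (b ν).1 : ℝ) * (σ (b ν).2 : ℝ)
    + β * ∑ μ : Fin k', (σ (l μ) : ℝ))

/-- Partition function of the `t`-perturbed (cavity) system. -/
noncomputable def Zcav (n : ℕ) (β : ℝ) {k k' : ℕ} (b : Fin k → Fin n × Fin n)
    (l : Fin k' → Fin n) : ℝ :=
  ∑ σ : Conf n, cavWeight n β b l σ

/-- Gibbs expectation `ω_t` of the `t`-perturbed (cavity) system at fixed realization. -/
noncomputable def gibbsCav (n : ℕ) (β : ℝ) {k k' : ℕ} (b : Fin k → Fin n × Fin n)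
    (l : Fin k' → Fin n) (f : Conf n → ℝ) : ℝ :=
  (∑ σ : Conf n, f σ * cavWeight n β b l σ) / Zcav n β b l

/-- Quenched expectation `E_t` of the `t`-perturbed system at connectivity `αt`:
`k` is Poisson(αt·n), `k'` is Poisson(2·αt·t), and all indices are i.i.d. uniform. -/
noncomputable def quenchedCav (n : ℕ) (αt t : ℝ)
    (F : (k : ℕ) → (Fin k → Fin n × Fin n) → (k' : ℕ) → (Fin k' → Fin n) → ℝ) : ℝ :=
  ∑' k : ℕ, ∑' k' : ℕ, poissonPMF (αt * n) k * poissonPMF (2 * αt * t) k' *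
    ((∑ b : Fin k → Fin n × Fin n, ∑ l : Fin k' → Fin n, F k b k' l) /
      (((n : ℝ) ^ 2) ^ k * (n : ℝ) ^ k'))

/-- The cavity function `Ψ_n(α̃, β; t) = E_t[ln Z_{n,t}] - E[ln Z_n(α̃, β)]`. -/
noncomputable def Psi (n : ℕ) (αt β t : ℝ) : ℝ :=
  quenchedCav n αt t (fun _ b _ l => Real.log (Zcav n β b l))
    - quenched n αt (fun _ b => Real.log (Zdil n β b))


lemma spin_cases {a : SpinVal} : (a : ℝ) = -1 ∨ (a : ℝ) = 1 := by
  have h := a.2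
  rw [Finset.mem_insert, Finset.mem_singleton] at h
  exact h

lemma monomial_nonneg (N : ℕ) (e : Fin N → ℕ) :
    0 ≤ ∑ σ : Conf N, ∏ i : Fin N, (σ i : ℝ) ^ (e i) := by
  rw [← Fintype.prod_sum (fun i (a : SpinVal) => (a : ℝ) ^ (e i))]
  apply Finset.prod_nonneg
  intro i _
  rw [Finset.sum_coe_sort (SpinVal) (fun a => a ^ (e i))]
  rw [show (SpinVal : Finset ℝ) = {-1, 1} from rfl]
  rw [Finset.sum_pair (by norm_num : (-1:ℝ) ≠ 1)]
  rcases Nat.even_or_odd (e i) with h | h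
  · simp [h.neg_one_pow]
  · simp [h.neg_one_pow]

lemma multiset_spin_sum_nonneg (N : ℕ) (L : Multiset (Fin N)) :
    0 ≤ ∑ σ : Conf N, (L.map fun i => (σ i : ℝ)).prod := by
  have key : ∀ σ : Conf N,
      (L.map fun i => (σ i : ℝ)).prod = ∏ i : Fin N, (σ i : ℝ) ^ (L.count i) := by
    intro σ
    rw [Finset.prod_multiset_map_count]
    refine Finset.prod_subset (Finset.subset_univ _) ?_
    intro i _ hi
    simp [Multiset.count_eq_zero_of_notMem (by simpa using hi)]
  simp_rw [key]
  exact monomial_nonneg N L.count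

lemma spin_exp (β : ℝ) (u v : SpinVal) :
    Real.exp (β * ((u : ℝ) * (v : ℝ)))
      = Real.cosh β + Real.sinh β * ((u : ℝ) * (v : ℝ)) := by
  rcases spin_cases (a := u) with hu | hu <;> rcases spin_cases (a := v) with hv | hv <;>
    rw [hu, hv] <;> norm_num [Real.cosh_add_sinh, Real.cosh_sub_sinh, mul_comm,
      ← sub_eq_add_neg]

lemma numer_nonneg (N : ℕ) (β : ℝ) (hβ : 0 ≤ β) {k : ℕ} (b : Fin k → Fin N × Fin N)
    (p q : Fin N) :
    0 ≤ ∑ σ : Conf N, (σ p : ℝ) * (σ q : ℝ) * Real.exp (-β * Hdil b σ) := by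
  have hexp : ∀ σ : Conf N, Real.exp (-β * Hdil b σ)
      = ∑ t : Finset (Fin k),
          (Real.cosh β ^ t.card * Real.sinh β ^ tᶜ.card) *
            ∏ ν ∈ tᶜ, (σ (b ν).1 : ℝ) * (σ (b ν).2 : ℝ) := by
    intro σ
    have : -β * Hdil b σ = ∑ ν : Fin k, β * ((σ (b ν).1 : ℝ) * (σ (b ν).2 : ℝ)) := by
      simp [Hdil, Finset.mul_sum]
    rw [this, Real.exp_sum]
    simp_rw [spin_exp β]
    rw [Fintype.prod_add (fun _ => Real.cosh β)
      (fun ν => Real.sinh β * ((σ (b ν).1 : ℝ) * (σ (b ν).2 : ℝ)))]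
    refine Finset.sum_congr rfl fun t _ => ?_
    rw [Finset.prod_const, Finset.prod_mul_distrib, Finset.prod_const]
    ring
  simp_rw [hexp, Finset.mul_sum]
  rw [Finset.sum_comm]
  refine Finset.sum_nonneg fun t _ => ?_
  have hmono : 0 ≤ ∑ σ : Conf N,
      (σ p : ℝ) * (σ q : ℝ) * ∏ ν ∈ tᶜ, (σ (b ν).1 : ℝ) * (σ (b ν).2 : ℝ) := by
    have := multiset_spin_sum_nonneg N
      (p ::ₘ q ::ₘ (tᶜ.val.bind fun ν => {(b ν).1, (b ν).2}))
    convert this using 2 with σ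
    rw [Multiset.map_cons, Multiset.map_cons, Multiset.prod_cons, Multiset.prod_cons,
      Multiset.map_bind, Multiset.prod_bind]
    rw [Finset.prod]
    simp [mul_assoc]
  have heq : (∑ σ : Conf N, (σ p : ℝ) * (σ q : ℝ) *
        ((Real.cosh β ^ t.card * Real.sinh β ^ tᶜ.card) *
          ∏ ν ∈ tᶜ, (σ (b ν).1 : ℝ) * (σ (b ν).2 : ℝ)))
      = (Real.cosh β ^ t.card * Real.sinh β ^ tᶜ.card) *
        ∑ σ : Conf N, (σ p : ℝ) * (σ q : ℝ) *
          ∏ ν ∈ tᶜ, (σ (b ν).1 : ℝ) * (σ (b ν).2 : ℝ) := by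
    rw [Finset.mul_sum]
    exact Finset.sum_congr rfl fun σ _ => by ring
  rw [heq]
  have hc : 0 ≤ Real.cosh β ^ t.card * Real.sinh β ^ tᶜ.card := by
    have h1 := Real.cosh_pos (x := β)
    have h2 : 0 ≤ Real.sinh β := by rwa [← Real.sinh_zero, Real.sinh_le_sinh]
    positivity
  exact mul_nonneg hc hmono
lemma Zdil_pos (N : ℕ) (β : ℝ) {k : ℕ} (b : Fin k → Fin N × Fin N) :
    0 < Zdil N β b := by
  have : Nonempty (Conf N) := ⟨fun _ => ⟨1, by norm_num [SpinVal]⟩⟩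
  exact Finset.sum_pos (fun σ _ => Real.exp_pos _) Finset.univ_nonempty

lemma gibbs_pair_nonneg (N : ℕ) (β : ℝ) (hβ : 0 ≤ β) {k : ℕ}
    (b : Fin k → Fin N × Fin N) (p q : Fin N) :
    0 ≤ gibbs N β b (fun σ => (σ p : ℝ) * (σ q : ℝ)) :=
  div_nonneg (numer_nonneg N β hβ b p q) (Zdil_pos N β b).le

/-- **Fixed-disorder Jensen inequality for multi-overlaps.** For every disorder
realization `(k, b)` and every `m ≥ 1`,
`(1/N²) Σ_{p,q} (ω(σ_p σ_q))^m ≥ ((1/N²) Σ_{p,q} ω(σ_p σ_q))^m`,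
i.e. `Ω(q²_{1…m}) ≥ Ω(m²)^m` at fixed disorder. -/
theorem overlap_jensen_fixed_disorder (N : ℕ) (hN : 1 ≤ N) (β : ℝ) (hβ : 0 ≤ β)
    (k : ℕ) (b : Fin k → Fin N × Fin N) (m : ℕ) (hm : 1 ≤ m) :
    ((1 / (N : ℝ) ^ 2) * ∑ p : Fin N, ∑ q : Fin N,
        gibbs N β b (fun σ => (σ p : ℝ) * (σ q : ℝ))) ^ m
      ≤ (1 / (N : ℝ) ^ 2) * ∑ p : Fin N, ∑ q : Fin N,
          (gibbs N β b (fun σ => (σ p : ℝ) * (σ q : ℝ))) ^ m := by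
  obtain ⟨n, rfl⟩ : ∃ n, m = n + 1 := ⟨m - 1, (Nat.succ_pred_eq_of_pos hm).symm⟩
  set g : Fin N × Fin N → ℝ :=
    fun x => gibbs N β b (fun σ => (σ x.1 : ℝ) * (σ x.2 : ℝ)) with hg
  have hgnn : ∀ x : Fin N × Fin N, 0 ≤ g x := fun x => gibbs_pair_nonneg N β hβ b x.1 x.2
  have hN2 : (0:ℝ) < (N : ℝ) ^ 2 := by
    have : (0:ℝ) < (N : ℝ) := by exact_mod_cast Nat.lt_of_lt_of_le Nat.zero_lt_one hN
    positivity
  have hcard : (((Finset.univ : Finset (Fin N × Fin N)).card) : ℝ) = (N : ℝ) ^ 2 := by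
    simp [sq]
  have key := pow_sum_div_card_le_sum_pow (s := (Finset.univ : Finset (Fin N × Fin N)))
    (f := g) (fun i _ => hgnn i) n
  rw [hcard] at key
  have hS : (∑ p : Fin N, ∑ q : Fin N,
      gibbs N β b (fun σ => (σ p : ℝ) * (σ q : ℝ))) = ∑ x : Fin N × Fin N, g x := by
    rw [Fintype.sum_prod_type]
  have hT : (∑ p : Fin N, ∑ q : Fin N,
      (gibbs N β b (fun σ => (σ p : ℝ) * (σ q : ℝ))) ^ (n + 1))
        = ∑ x : Fin N × Fin N, g x ^ (n + 1) := by
    rw [Fintype.sum_prod_type]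
  rw [hS, hT]
  have hexp : ((1 / (N : ℝ) ^ 2) * ∑ x : Fin N × Fin N, g x) ^ (n + 1)
      = ((∑ x : Fin N × Fin N, g x) ^ (n + 1) / ((N : ℝ) ^ 2) ^ n) / (N : ℝ) ^ 2 := by
    rw [one_div, inv_mul_eq_div, div_pow]; ring
  rw [hexp, one_div, inv_mul_eq_div, div_le_div_iff_of_pos_right hN2]
  exact key
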